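/- Let p be a prime, let R = ℤ[X]/(Φ_p(X)) where Φ_p is the p-th cyclotomic polynomial, let ζ ∈ R be the image of X, and let 𝔪 = (1 - ζ) be the principal ideal generated by 1 - ζ. Then for every y ∈ 𝔪, the element (1 + y)^p - 1 lies in 𝔪^{p+1}. In other words, in the quotient ring R/𝔪^{p+1}, every element of 1 + 𝔪̄ has p-th power equal to 1, where 𝔪̄ is the image of 𝔪. -/

import Mathlib

/-- The ring `ℤ[X]/(Φ_p(X))`, i.e. the ring of integers `ℤ[ζ_p]` of the `p`-th
cyclotomic field. -/
abbrev cycIntRing (p : ℕ) : Type :=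
  Polynomial ℤ ⧸ Ideal.span {Polynomial.cyclotomic p ℤ}

/-- The primitive `p`-th root of unity `ζ`, the image of `X` in `ℤ[X]/(Φ_p(X))`. -/
noncomputable def zetaCyc (p : ℕ) : cycIntRing p :=
  Ideal.Quotient.mk (Ideal.span {Polynomial.cyclotomic p ℤ}) Polynomial.X

/-- The ideal `𝔪 = (1 - ζ)` of `ℤ[ζ_p]`. -/
noncomputable def mCyc (p : ℕ) : Ideal (cycIntRing p) :=
  Ideal.span {1 - zetaCyc p}

open Polynomial Finset in
private lemma cycl_key (p : ℕ) (hp : p.Prime) :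
    cyclotomic p ℤ = ∑ k ∈ Finset.range p, ((p.choose (k+1) : ℤ[X]) * (X - 1) ^ k) := by
  haveI : Fact p.Prime := ⟨hp⟩
  have hX : (X - 1 : ℤ[X]) ≠ 0 := by
    simpa using Polynomial.X_sub_C_ne_zero (1 : ℤ)
  apply mul_right_cancel₀ hX
  rw [cyclotomic_prime, geom_sum_mul, Finset.sum_mul]
  have h1 : ((X - 1 : ℤ[X]) + 1) ^ p
      = ∑ k ∈ Finset.range (p+1), (X-1)^k * 1^(p-k) * (p.choose k : ℤ[X]) := add_pow _ _ _
  simp only [one_pow, mul_one, sub_add_cancel] at h1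
  rw [Finset.sum_range_succ'] at h1
  simp only [pow_zero, Nat.choose_zero_right, Nat.cast_one, one_mul] at h1
  rw [h1, add_sub_cancel_right]
  exact Finset.sum_congr rfl fun k _ => by ring

set_option maxHeartbeats 2000000 in
set_option synthInstance.maxHeartbeats 400000 in
theorem one_add_pow_p_sub_one_mem (p : ℕ) (hp : p.Prime) :
    (∀ y ∈ mCyc p, (1 + y) ^ p - 1 ∈ mCyc p ^ (p + 1)) ∧
    (∀ y ∈ mCyc p, (Ideal.Quotient.mk (mCyc p ^ (p + 1)) (1 + y)) ^ p = 1) := by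
  haveI : Fact p.Prime := ⟨hp⟩
  have hp2 : 2 ≤ p := hp.two_le
  suffices hmain : ∀ y ∈ mCyc p, (1 + y) ^ p - 1 ∈ mCyc p ^ (p + 1) by
    refine ⟨hmain, fun y hy => ?_⟩
    have h := Ideal.Quotient.eq_zero_iff_mem.2 (hmain y hy)
    rw [map_sub, map_pow, map_one, sub_eq_zero] at h
    exact h
  set φ : Polynomial ℤ →+* cycIntRing p :=
    Ideal.Quotient.mk (Ideal.span {Polynomial.cyclotomic p ℤ}) with hφ
  set ζ : cycIntRing p := zetaCyc p with hζ
  set μ : cycIntRing p := ζ - 1 with hμdef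
  have hζφ : ζ = φ Polynomial.X := rfl
  have hmspan : mCyc p = Ideal.span {μ} := by
    rw [mCyc]
    have h1 : (1 : cycIntRing p) - ζ = -μ := by rw [hμdef]; ring
    rw [h1, Ideal.span_singleton_neg]
  have hμmem : μ ∈ mCyc p := by rw [hmspan]; exact Ideal.subset_span rfl
  -- the key identity in R
  have hid : (0 : cycIntRing p)
      = ∑ k ∈ Finset.range p, (p.choose (k+1) : cycIntRing p) * μ ^ k := by
    have h0 : φ (Polynomial.cyclotomic p ℤ) = 0 :=
      Ideal.Quotient.eq_zero_iff_mem.2 (Ideal.subset_span rfl)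
    have h := congrArg φ (cycl_key p hp)
    rw [h0] at h
    rw [map_sum] at h
    simpa [map_mul, map_pow, map_sub, map_natCast, map_one, ← hζφ, ← hμdef] using h
  -- the element u with p * u = -μ^(p-1)
  set u : cycIntRing p :=
    ∑ k ∈ Finset.range (p-1), ((p.choose (k+1) / p : ℕ) : cycIntRing p) * μ ^ k with hu
  have hdvd_choose : ∀ k, k ∈ Finset.range (p-1) → p ∣ p.choose (k+1) := by
    intro k hk
    rw [Finset.mem_range] at hk
    exact hp.dvd_choose_self (Nat.succ_ne_zero k) (by omega)
  have hpu : (p : cycIntRing p) * u = - μ ^ (p-1) := by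
    have hp1 : p - 1 + 1 = p := by omega
    have hsplit := Finset.sum_range_succ
      (fun k => (p.choose (k+1) : cycIntRing p) * μ ^ k) (p-1)
    rw [hp1] at hsplit
    rw [hsplit, Nat.choose_self] at hid
    have hμu : (p : cycIntRing p) * u
        = ∑ k ∈ Finset.range (p-1), (p.choose (k+1) : cycIntRing p) * μ ^ k := by
      rw [hu, Finset.mul_sum]
      refine Finset.sum_congr rfl fun k hk => ?_
      have hd := hdvd_choose k hk
      rw [← mul_assoc, ← Nat.cast_mul, Nat.mul_div_cancel' hd]
    rw [hμu]
    push_cast at hid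
    linear_combination -hid
  -- u ≡ 1 mod 𝔪
  have hu1 : u - 1 ∈ mCyc p := by
    have h0 : (0:ℕ) < p - 1 := by omega
    rw [hu, Finset.range_eq_Ico, Finset.sum_eq_sum_Ico_succ_bot h0]
    simp only [zero_add, pow_zero, Nat.choose_one_right, Nat.div_self hp.pos, Nat.cast_one,
      mul_one]
    rw [add_sub_cancel_left]
    refine Ideal.sum_mem _ fun k hk => ?_
    rw [Finset.mem_Ico] at hk
    rw [hmspan, Ideal.mem_span_singleton]
    exact Dvd.dvd.mul_left (dvd_pow_self μ (by omega)) _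
  -- p ∈ 𝔪^(p-1)
  have hppow : ∀ j, j ≤ p - 1 → (p : cycIntRing p) ∈ mCyc p ^ j := by
    intro j
    induction j with
    | zero => intro _; simp
    | succ n ih =>
      intro hn
      have hpn : (p : cycIntRing p) ∈ mCyc p ^ n := ih (by omega)
      have key : (p : cycIntRing p) = -μ^(p-1) - (p : cycIntRing p) * (u - 1) := by
        linear_combination hpu
      rw [key]
      apply Ideal.sub_mem
      · exact neg_mem (Ideal.pow_le_pow_right hn (Ideal.pow_mem_pow hμmem (p-1)))
      · rw [pow_succ (mCyc p) n]
        exact Ideal.mul_mem_mul hpn hu1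
  have hpm1 : (p : cycIntRing p) ∈ mCyc p ^ (p-1) := hppow (p-1) le_rfl
  have hpmem : (p : cycIntRing p) ∈ mCyc p := by
    have h := Ideal.pow_le_pow_right (show 1 ≤ p - 1 by omega) hpm1
    simpa using h
  -- every element is congruent to an integer mod 𝔪
  have hA : ∀ r : cycIntRing p, ∃ n : ℤ, r - (n : cycIntRing p) ∈ mCyc p := by
    intro r
    obtain ⟨f, rfl⟩ := Ideal.Quotient.mk_surjective r
    refine ⟨f.eval 1, ?_⟩
    rw [hmspan, Ideal.mem_span_singleton]
    have hdvd : (Polynomial.X - Polynomial.C 1) ∣ (f - Polynomial.C (f.eval 1)) := by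
      rw [Polynomial.dvd_iff_isRoot]
      simp [Polynomial.IsRoot]
    obtain ⟨g, hg⟩ := hdvd
    refine ⟨φ g, ?_⟩
    have h := congrArg φ hg
    rw [map_sub, map_mul, map_sub] at h
    rw [show φ (Polynomial.C (f.eval 1)) = ((f.eval 1 : ℤ) : cycIntRing p) by
      exact eq_intCast (φ.comp Polynomial.C) _] at h
    rw [show φ (Polynomial.C 1) = 1 by simp] at h
    rw [← hζφ, ← hμdef] at h
    exact h
  -- Fermat: t^p ≡ t mod 𝔪
  have hC : ∀ t : cycIntRing p, t ^ p - t ∈ mCyc p := by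
    intro t
    obtain ⟨n, hn⟩ := hA t
    have h1 : t ^ p - (n : cycIntRing p) ^ p ∈ mCyc p := by
      rw [hmspan, Ideal.mem_span_singleton] at hn ⊢
      exact hn.trans (sub_dvd_pow_sub_pow t (n : cycIntRing p) p)
    have h2 : ((n : cycIntRing p)) ^ p - (n : cycIntRing p) ∈ mCyc p := by
      have hdvd : (p : ℤ) ∣ n ^ p - n := by
        have hz : ((n ^ p - n : ℤ) : ZMod p) = 0 := by
          push_cast
          rw [ZMod.pow_card]
          ring
        exact (ZMod.intCast_zmod_eq_zero_iff_dvd _ _).1 hz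
      obtain ⟨d, hd⟩ := hdvd
      have : ((n : cycIntRing p)) ^ p - (n : cycIntRing p)
          = (p : cycIntRing p) * ((d : ℤ) : cycIntRing p) := by
        have := congrArg (fun z : ℤ => (z : cycIntRing p)) hd
        push_cast at this
        linear_combination this
      rw [this]
      exact Ideal.mul_mem_right _ _ hpmem
    have : t ^ p - t = (t ^ p - (n : cycIntRing p) ^ p)
        + (((n : cycIntRing p)) ^ p - (n : cycIntRing p)) + ((n : cycIntRing p) - t) := by ring
    rw [this]
    refine Ideal.add_mem _ (Ideal.add_mem _ h1 h2) ?_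
    have : ((n : cycIntRing p) - t) = -(t - (n : cycIntRing p)) := by ring
    rw [this]
    exact neg_mem hn
  -- main computation
  intro y hy
  obtain ⟨t, ht⟩ : μ ∣ y := by rwa [hmspan, Ideal.mem_span_singleton] at hy
  have hexp : (1 + y) ^ p = ∑ k ∈ Finset.range (p+1), y ^ k * (p.choose k : cycIntRing p) := by
    rw [add_comm, add_pow]
    simp
  have hsum : (1 + y) ^ p - 1
      = (∑ k ∈ Finset.Ico 2 p, y ^ k * (p.choose k : cycIntRing p))
        + ((p : cycIntRing p) * y + y ^ p) := by
    rw [hexp, Finset.sum_range_succ, Finset.range_eq_Ico,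
      Finset.sum_eq_sum_Ico_succ_bot hp.pos, Finset.sum_eq_sum_Ico_succ_bot (by omega : 1 < p)]
    simp only [pow_zero, Nat.choose_zero_right, Nat.cast_one, mul_one, pow_one,
      Nat.choose_one_right, Nat.choose_self]
    ring
  rw [hsum]
  apply Ideal.add_mem
  · refine Ideal.sum_mem _ fun k hk => ?_
    rw [Finset.mem_Ico] at hk
    obtain ⟨j, rfl⟩ : ∃ j, k = 2 + j := ⟨k - 2, by omega⟩
    obtain ⟨a, ha⟩ := hp.dvd_choose_self (show 2 + j ≠ 0 by omega) (by omega)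
    have hmem : y ^ 2 * (p : cycIntRing p) ∈ mCyc p ^ (p+1) := by
      have heq : mCyc p ^ (p+1) = mCyc p ^ 2 * mCyc p ^ (p-1) := by
        rw [← pow_add]
        congr 1
        omega
      rw [heq]
      exact Ideal.mul_mem_mul (Ideal.pow_mem_pow hy 2) hpm1
    have heq2 : y ^ (2+j) * ((p.choose (2+j) : cycIntRing p))
        = (y ^ j * (a : cycIntRing p)) * (y ^ 2 * (p : cycIntRing p)) := by
      rw [ha]
      push_cast
      ring
    rw [heq2]
    exact Ideal.mul_mem_left _ _ hmem
  · set G : cycIntRing p := (p : cycIntRing p) * y + y ^ p with hG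
    have hGp : G ∈ mCyc p ^ p := by
      apply Ideal.add_mem
      · have heq : mCyc p ^ p = mCyc p ^ (p-1) * mCyc p := by
          rw [← pow_succ (mCyc p) (p-1)]
          congr 1
          omega
        rw [heq]
        exact Ideal.mul_mem_mul hpm1 hy
      · exact Ideal.pow_mem_pow hy p
    have huG : u * G ∈ mCyc p ^ (p+1) := by
      have h1 : u * G = μ ^ p * (u * t ^ p - t) := by
        have hμp : μ ^ p = μ ^ (p-1) * μ := by
          rw [← pow_succ]
          congr 1
          omega
        rw [hG, ht, hμp, mul_pow, hμp]
        linear_combination (μ * t) * hpu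
      have h2 : u * t ^ p - t ∈ mCyc p := by
        have : u * t ^ p - t = (u - 1) * t ^ p + (t ^ p - t) := by ring
        rw [this]
        exact Ideal.add_mem _ (Ideal.mul_mem_right _ _ hu1) (hC t)
      rw [h1, pow_succ (mCyc p) p]
      exact Ideal.mul_mem_mul (Ideal.pow_mem_pow hμmem p) h2
    have hfinal : G = u * G - (u - 1) * G := by ring
    rw [hfinal]
    refine Ideal.sub_mem _ huG ?_
    rw [pow_succ (mCyc p) p, mul_comm (mCyc p ^ p)]
    exact Ideal.mul_mem_mul hu1 hGp
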